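/- arXiv:2205.13574 — 2 statements merged into one kernel-verified Lean document; each statement's English description precedes it below -/
import Mathlib

section
/- Define softmax : ℝ^m → ℝ^m by softmax(z)_c = exp(z_c)/Σ_{j=1}^m exp(z_j). Let u_1, …, u_n : ℝ^k → ℝ^m be differentiable at θ ∈ ℝ^k (the per-sample logit maps), let y_1, …, y_n ∈ ℝ^m with Σ_c (y_i)_c = 1 for each i, set f_i(θ) = softmax(u_i(θ)), and define the empirical cross-entropy risk J(θ) = (1/n)·Σ_{i=1}^n ( −Σ_{c=1}^m (y_i)_c · log(f_i(θ)_c) ). Then J is differentiable at θ and ‖∇J(θ)‖ ≤ (1/n)·Σ_{i=1}^n ‖f_i(θ) − y_i‖·‖D u_i(θ)‖, where D u_i(θ) is the Jacobian of u_i at θ, ‖·‖ on the Jacobian is the operator norm, and the vector norms are Euclidean. -/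
/-- The softmax map `softmax(z)_c = exp(z_c) / Σ_j exp(z_j)`. -/
noncomputable def softmax {m : ℕ} (z : EuclideanSpace ℝ (Fin m)) :
    EuclideanSpace ℝ (Fin m) :=
  WithLp.toLp 2 (fun c => Real.exp (z c) / ∑ j, Real.exp (z j))

lemma softmax_key {m : ℕ} [Nonempty (Fin m)] (y : EuclideanSpace ℝ (Fin m))
    (hy : ∑ c, y c = 1) (z : EuclideanSpace ℝ (Fin m)) :
    HasFDerivAt (fun w : EuclideanSpace ℝ (Fin m) => -∑ c, y c * Real.log (softmax w c))
      (innerSL ℝ (softmax z - y)) z := by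
  have hSpos : ∀ w : EuclideanSpace ℝ (Fin m), 0 < ∑ j, Real.exp (w j) := fun w =>
    Finset.sum_pos (fun j _ => Real.exp_pos _) Finset.univ_nonempty
  -- rewrite the function
  have hfun : (fun w : EuclideanSpace ℝ (Fin m) => -∑ c, y c * Real.log (softmax w c))
      = fun w => (-∑ c, y c * w c) + Real.log (∑ j, Real.exp (w j)) := by
    funext w
    have : ∀ c, Real.log (softmax w c) = w c - Real.log (∑ j, Real.exp (w j)) := by
      intro c
      rw [softmax]
      rw [Real.log_div (Real.exp_pos _).ne' (hSpos w).ne', Real.log_exp]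
    simp only [this, mul_sub, Finset.sum_sub_distrib, neg_sub, ← Finset.sum_mul, hy]
    ring
  rw [hfun]
  -- derivative of the linear part
  have h1 : HasFDerivAt (fun w : EuclideanSpace ℝ (Fin m) => -∑ c, y c * w c)
      (-innerSL ℝ y) z := by
    have hfe : (fun w : EuclideanSpace ℝ (Fin m) => -∑ c, y c * w c)
        = fun w => (-innerSL ℝ y) w := by
      funext w
      simp [PiLp.inner_apply, mul_comm]
    rw [hfe]
    exact (-innerSL ℝ y).hasFDerivAt
  -- derivative of the log-sum-exp part
  have hS : HasFDerivAt (fun w : EuclideanSpace ℝ (Fin m) => ∑ j, Real.exp (w j))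
      (∑ j, Real.exp (z j) • (EuclideanSpace.proj j : EuclideanSpace ℝ (Fin m) →L[ℝ] ℝ)) z := by
    refine HasFDerivAt.fun_sum fun j _ => ?_
    have hp : HasFDerivAt (fun w : EuclideanSpace ℝ (Fin m) => w j)
        (EuclideanSpace.proj j : EuclideanSpace ℝ (Fin m) →L[ℝ] ℝ) z :=
      (EuclideanSpace.proj (𝕜 := ℝ) j).hasFDerivAt
    exact (Real.hasDerivAt_exp (z j)).comp_hasFDerivAt z hp
  have h2 : HasFDerivAt (fun w : EuclideanSpace ℝ (Fin m) => Real.log (∑ j, Real.exp (w j)))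
      ((∑ j, Real.exp (z j))⁻¹ •
        ∑ j, Real.exp (z j) • (EuclideanSpace.proj j : EuclideanSpace ℝ (Fin m) →L[ℝ] ℝ)) z := by
    have h := (Real.hasDerivAt_log (hSpos z).ne').comp_hasFDerivAt z hS
    exact h
  have h := h1.add h2
  refine h.congr_fderiv (Eq.symm ?_)
  ext v
  simp only [ContinuousLinearMap.add_apply, ContinuousLinearMap.neg_apply,
    ContinuousLinearMap.smul_apply, ContinuousLinearMap.sum_apply,
    PiLp.proj_apply, innerSL_apply_apply, PiLp.inner_apply,
    RCLike.inner_apply, conj_trivial, smul_eq_mul]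
  have hc : ∀ c : Fin m, (softmax z - y) c * v c
      = -(y c * v c) + (∑ j, Real.exp (z j))⁻¹ * (Real.exp (z c) * v c) := by
    intro c
    have : (softmax z - y) c = Real.exp (z c) / (∑ j, Real.exp (z j)) - y c := by
      simp [softmax, PiLp.sub_apply]
    rw [this]; field_simp; ring
  simp only [mul_comm (v.ofLp _) _]
  simp only [hc, Finset.sum_add_distrib, ← Finset.mul_sum, Finset.sum_neg_distrib]

/-- Proposition 2 (cross-entropy): for the empirical cross-entropy risk of a
softmax classifier with differentiable logit maps `uᵢ`, `J` is differentiable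
at `θ` and `‖∇J(θ)‖ ≤ (1/n) Σᵢ ‖fᵢ(θ) − yᵢ‖ ‖Duᵢ(θ)‖`, where
`fᵢ = softmax ∘ uᵢ` and `Duᵢ(θ)` is the Jacobian of `uᵢ` at `θ`. -/
theorem grad_norm_crossEntropy_bound {n m k : ℕ}
    (u : Fin n → EuclideanSpace ℝ (Fin k) → EuclideanSpace ℝ (Fin m))
    (y : Fin n → EuclideanSpace ℝ (Fin m))
    (θ : EuclideanSpace ℝ (Fin k))
    (hu : ∀ i, DifferentiableAt ℝ (u i) θ)
    (hy : ∀ i, ∑ c, y i c = 1)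
    (f : Fin n → EuclideanSpace ℝ (Fin k) → EuclideanSpace ℝ (Fin m))
    (hf : ∀ i ω, f i ω = softmax (u i ω))
    (J : EuclideanSpace ℝ (Fin k) → ℝ)
    (hJ : ∀ ω, J ω = (1 / (n : ℝ)) * ∑ i, -∑ c, y i c * Real.log (f i ω c)) :
    DifferentiableAt ℝ J θ ∧
      ‖gradient J θ‖ ≤
        (1 / (n : ℝ)) * ∑ i, ‖f i θ - y i‖ * ‖fderiv ℝ (u i) θ‖ := by
  -- degenerate cases
  rcases Nat.eq_zero_or_pos n with hn | hn
  · subst hn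
    have hJ0 : J = fun _ => 0 := by
      funext ω; simp [hJ ω]
    subst hJ0
    constructor
    · exact differentiableAt_const 0
    · have : gradient (fun _ : EuclideanSpace ℝ (Fin k) => (0:ℝ)) θ = 0 := by
        simp [gradient, fderiv_const]
      rw [this]; simp
  rcases Nat.eq_zero_or_pos m with hm | hm
  · exfalso
    have := hy ⟨0, hn⟩
    subst hm
    simpa using this
  haveI : Nonempty (Fin m) := ⟨⟨0, hm⟩⟩
  -- main case
  set D : Fin n → (EuclideanSpace ℝ (Fin k) →L[ℝ] ℝ) :=
    fun i => (innerSL ℝ (f i θ - y i)).comp (fderiv ℝ (u i) θ) with hD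
  have hli : ∀ i, HasFDerivAt (fun ω => -∑ c, y i c * Real.log (f i ω c)) (D i) θ := by
    intro i
    have hkey := softmax_key (y i) (hy i) (u i θ)
    have hcomp := hkey.comp θ (hu i).hasFDerivAt
    rw [← hf i θ] at hcomp
    have : (fun ω => -∑ c, y i c * Real.log (f i ω c))
        = (fun w : EuclideanSpace ℝ (Fin m) => -∑ c, y i c * Real.log (softmax w c)) ∘ (u i) := by
      funext ω; simp [hf i ω, Function.comp]
    rw [this]
    exact hcomp
  have hJder : HasFDerivAt J ((1 / (n : ℝ)) • ∑ i, D i) θ := by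
    have hsum : HasFDerivAt (fun ω => ∑ i, -∑ c, y i c * Real.log (f i ω c)) (∑ i, D i) θ :=
      HasFDerivAt.fun_sum fun i _ => hli i
    have := hsum.fun_const_smul (1 / (n : ℝ))
    have hfun : (fun ω => (1 / (n : ℝ)) • ∑ i, -∑ c, y i c * Real.log (f i ω c)) = J := by
      funext ω; rw [hJ ω]; simp
    rwa [hfun] at this
  refine ⟨hJder.differentiableAt, ?_⟩
  have hgrad : ‖gradient J θ‖ = ‖fderiv ℝ J θ‖ := by
    rw [gradient]
    exact (InnerProductSpace.toDual ℝ _).symm.norm_map _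
  rw [hgrad, hJder.fderiv]
  calc ‖(1 / (n : ℝ)) • ∑ i, D i‖ = |1 / (n : ℝ)| * ‖∑ i, D i‖ := by
        rw [show |1 / (n:ℝ)| = ‖(1/(n:ℝ))‖ from rfl]
        exact norm_smul (1/(n:ℝ)) (∑ i, D i)
    _ ≤ (1 / (n : ℝ)) * ∑ i, ‖D i‖ := by
        rw [abs_of_nonneg (by positivity)]
        exact mul_le_mul_of_nonneg_left (norm_sum_le _ _) (by positivity)
    _ ≤ (1 / (n : ℝ)) * ∑ i, ‖f i θ - y i‖ * ‖fderiv ℝ (u i) θ‖ := by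
        refine mul_le_mul_of_nonneg_left (Finset.sum_le_sum fun i _ => ?_) (by positivity)
        calc ‖D i‖ ≤ ‖innerSL ℝ (f i θ - y i)‖ * ‖fderiv ℝ (u i) θ‖ :=
              ContinuousLinearMap.opNorm_comp_le _ _
          _ = ‖f i θ - y i‖ * ‖fderiv ℝ (u i) θ‖ := by rw [innerSL_apply_norm]
end

section
/- Let σ : ℝ → ℝ be the sigmoid function σ(z) = 1/(1 + exp(−z)), let u : ℝ^k → ℝ be twice continuously differentiable, let y ∈ ℝ, set f(θ) = σ(u(θ)), and define ℓ : ℝ^k → ℝ by ℓ(θ) = −( y·log(f(θ)) + (1 − y)·log(1 − f(θ)) ). Then for every θ ∈ ℝ^k and every v ∈ ℝ^k, Hess ℓ(θ)(v, v) ≤ ( f(θ)·(1 − f(θ))·‖∇u(θ)‖² + |f(θ) − y|·‖Hess u(θ)‖ )·‖v‖², where Hess ℓ(θ) and Hess u(θ) are the second-derivative bilinear forms, ‖Hess u(θ)‖ is the operator norm of Hess u(θ), and the vector norms are Euclidean. -/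
/-- The sigmoid function `σ(z) = 1 / (1 + exp(−z))`. -/
noncomputable def sigmoid (z : ℝ) : ℝ := 1 / (1 + Real.exp (-z))

lemma sig_pos_denom (z : ℝ) : 0 < 1 + Real.exp (-z) := by positivity

lemma sig_pos (z : ℝ) : 0 < sigmoid z := by
  unfold sigmoid; positivity

lemma one_sub_sig (z : ℝ) : 1 - sigmoid z = Real.exp (-z) / (1 + Real.exp (-z)) := by
  unfold sigmoid
  field_simp
  ring

lemma sig_lt_one (z : ℝ) : sigmoid z < 1 := by
  have := one_sub_sig z
  have h := div_pos (Real.exp_pos (-z)) (sig_pos_denom z)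
  linarith

lemma hasDerivAt_sigmoid (z : ℝ) :
    HasDerivAt sigmoid (sigmoid z * (1 - sigmoid z)) z := by
  have h1 : HasDerivAt (fun z : ℝ => 1 + Real.exp (-z)) (-Real.exp (-z)) z := by
    simpa using ((Real.hasDerivAt_exp (-z)).comp z ((hasDerivAt_id z).neg)).const_add 1
  have h2 := h1.inv (ne_of_gt (sig_pos_denom z))
  have heq : sigmoid = fun y => (1 + Real.exp (-y))⁻¹ := by
    funext y; simp [sigmoid, one_div]
  have : HasDerivAt sigmoid (Real.exp (-z) / (1 + Real.exp (-z)) ^ 2) z := by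
    rw [heq]; exact h2.congr_deriv (by ring)
  convert this using 1
  rw [one_sub_sig]
  unfold sigmoid
  field_simp

lemma bce_eq (y z : ℝ) :
    -(y * Real.log (sigmoid z) + (1 - y) * Real.log (1 - sigmoid z)) =
      Real.log (1 + Real.exp (-z)) + (1 - y) * z := by
  have h1 : Real.log (sigmoid z) = -Real.log (1 + Real.exp (-z)) := by
    rw [sigmoid, one_div, Real.log_inv]
  have h2 : Real.log (1 - sigmoid z) = -z - Real.log (1 + Real.exp (-z)) := by
    rw [one_sub_sig, Real.log_div (Real.exp_ne_zero _) (ne_of_gt (sig_pos_denom z)),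
      Real.log_exp]
  rw [h1, h2]; ring

lemma hasDerivAt_G (y z : ℝ) :
    HasDerivAt (fun z => Real.log (1 + Real.exp (-z)) + (1 - y) * z)
      (sigmoid z - y) z := by
  have h1 : HasDerivAt (fun z : ℝ => 1 + Real.exp (-z)) (-Real.exp (-z)) z := by
    simpa using ((Real.hasDerivAt_exp (-z)).comp z ((hasDerivAt_id z).neg)).const_add 1
  have hL := h1.log (ne_of_gt (sig_pos_denom z))
  have hlin : HasDerivAt (fun z : ℝ => (1 - y) * z) (1 - y) z := by
    simpa using (hasDerivAt_id z).const_mul (1 - y)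
  have := hL.add hlin
  refine this.congr_deriv ?_
  have hs : sigmoid z * (1 + Real.exp (-z)) = 1 := by
    rw [sigmoid]; field_simp
  field_simp
  nlinarith [hs]

/-- Per-sample form of Theorem 2: for a binary classifier `f = σ ∘ u` trained
with binary cross-entropy loss, the Hessian quadratic form of the loss is
bounded by `(f(1−f)‖∇u‖² + |f − y| ‖Hess u‖) ‖v‖²`. -/
theorem hessian_quadForm_binaryCrossEntropy_le {k : ℕ}
    (u : EuclideanSpace ℝ (Fin k) → ℝ) (hu : ContDiff ℝ 2 u) (y : ℝ)
    (f : EuclideanSpace ℝ (Fin k) → ℝ) (hf : ∀ ω, f ω = sigmoid (u ω))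
    (ℓ : EuclideanSpace ℝ (Fin k) → ℝ)
    (hℓ : ∀ ω, ℓ ω = -(y * Real.log (f ω) + (1 - y) * Real.log (1 - f ω))) :
    ∀ (θ v : EuclideanSpace ℝ (Fin k)),
      iteratedFDeriv ℝ 2 ℓ θ ![v, v] ≤
        (f θ * (1 - f θ) * ‖gradient u θ‖ ^ 2
          + |f θ - y| * ‖iteratedFDeriv ℝ 2 u θ‖) * ‖v‖ ^ 2 := by
  intro θ v
  have hu1 : Differentiable ℝ u := hu.differentiable (by norm_num)
  set G : ℝ → ℝ := fun z => Real.log (1 + Real.exp (-z)) + (1 - y) * z with hG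
  have hℓG : ℓ = fun ω => G (u ω) := by
    funext ω; rw [hℓ, hf, bce_eq]
  -- first derivative of ℓ
  have hD1 : ∀ x, HasFDerivAt ℓ ((sigmoid (u x) - y) • fderiv ℝ u x) x := by
    intro x
    rw [hℓG]
    exact (hasDerivAt_G y (u x)).comp_hasFDerivAt x (hu1 x).hasFDerivAt
  have hfd : fderiv ℝ ℓ = fun x => (sigmoid (u x) - y) • fderiv ℝ u x :=
    funext fun x => (hD1 x).fderiv
  -- derivative of the scalar factor
  have hc : HasFDerivAt (fun x => sigmoid (u x) - y)
      ((sigmoid (u θ) * (1 - sigmoid (u θ))) • fderiv ℝ u θ) θ := by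
    have := (hasDerivAt_sigmoid (u θ)).comp_hasFDerivAt θ (hu1 θ).hasFDerivAt
    exact this.sub_const y
  -- derivative of fderiv u
  have hA : HasFDerivAt (fderiv ℝ u) (fderiv ℝ (fderiv ℝ u) θ) θ :=
    ((hu.fderiv_right (m := 1) (by norm_num)).differentiable (by norm_num) θ).hasFDerivAt
  have hD2 : HasFDerivAt (fderiv ℝ ℓ)
      ((sigmoid (u θ) - y) • fderiv ℝ (fderiv ℝ u) θ +
        ((sigmoid (u θ) * (1 - sigmoid (u θ))) • fderiv ℝ u θ).smulRight
          (fderiv ℝ u θ)) θ := by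
    rw [hfd]
    exact hc.smul hA
  have key : iteratedFDeriv ℝ 2 ℓ θ ![v, v] =
      (sigmoid (u θ) - y) * (fderiv ℝ (fderiv ℝ u) θ v v) +
        sigmoid (u θ) * (1 - sigmoid (u θ)) * (fderiv ℝ u θ v) ^ 2 := by
    rw [iteratedFDeriv_two_apply, hD2.fderiv]
    simp [Matrix.cons_val_zero, Matrix.cons_val_one]
    ring
  have hH : iteratedFDeriv ℝ 2 u θ ![v, v] = fderiv ℝ (fderiv ℝ u) θ v v := by
    rw [iteratedFDeriv_two_apply]; simp
  have hgrad : ‖gradient u θ‖ = ‖fderiv ℝ u θ‖ := by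
    rw [gradient]; exact LinearIsometryEquiv.norm_map _ _
  have h1 : |fderiv ℝ u θ v| ≤ ‖gradient u θ‖ * ‖v‖ := by
    rw [hgrad]; exact (fderiv ℝ u θ).le_opNorm v
  have h2 : |fderiv ℝ (fderiv ℝ u) θ v v| ≤ ‖iteratedFDeriv ℝ 2 u θ‖ * (‖v‖ * ‖v‖) := by
    rw [← hH]
    have := (iteratedFDeriv ℝ 2 u θ).le_opNorm ![v, v]
    simpa [Fin.prod_univ_two, mul_assoc] using this
  have hσ0 : 0 < sigmoid (u θ) := sig_pos _
  have hσ1 : sigmoid (u θ) < 1 := sig_lt_one _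
  have hfθ : f θ = sigmoid (u θ) := hf θ
  rw [key, hfθ]
  have t1 : sigmoid (u θ) * (1 - sigmoid (u θ)) * (fderiv ℝ u θ v) ^ 2 ≤
      sigmoid (u θ) * (1 - sigmoid (u θ)) * (‖gradient u θ‖ ^ 2 * ‖v‖ ^ 2) := by
    apply mul_le_mul_of_nonneg_left _ (by nlinarith)
    have := sq_le_sq' (neg_abs_le _) (le_abs_self (fderiv ℝ u θ v))
    calc (fderiv ℝ u θ v) ^ 2 ≤ |fderiv ℝ u θ v| ^ 2 := by rw [sq_abs]
      _ ≤ (‖gradient u θ‖ * ‖v‖) ^ 2 := by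
          apply pow_le_pow_left₀ (abs_nonneg _) h1
      _ = ‖gradient u θ‖ ^ 2 * ‖v‖ ^ 2 := by ring
  have t2 : (sigmoid (u θ) - y) * fderiv ℝ (fderiv ℝ u) θ v v ≤
      |sigmoid (u θ) - y| * ‖iteratedFDeriv ℝ 2 u θ‖ * ‖v‖ ^ 2 := by
    calc (sigmoid (u θ) - y) * fderiv ℝ (fderiv ℝ u) θ v v
        ≤ |(sigmoid (u θ) - y) * fderiv ℝ (fderiv ℝ u) θ v v| := le_abs_self _
      _ = |sigmoid (u θ) - y| * |fderiv ℝ (fderiv ℝ u) θ v v| := abs_mul _ _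
      _ ≤ |sigmoid (u θ) - y| * (‖iteratedFDeriv ℝ 2 u θ‖ * (‖v‖ * ‖v‖)) :=
          mul_le_mul_of_nonneg_left h2 (abs_nonneg _)
      _ = |sigmoid (u θ) - y| * ‖iteratedFDeriv ℝ 2 u θ‖ * ‖v‖ ^ 2 := by ring
  nlinarith [t1, t2]
end
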